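/- (Proposition 6.6, pointwise decay of the low-frequency pressure) Let d ≥ 1 and 0 ≤ α < 1/2. There is a constant C > 0, depending only on d and α, with the following property. Let λ ≥ 1 and let G : ℝ^d → ℝ be measurable with |G(z)| ≤ λ^{-(d+1)} (1 + |z|/λ)^{-(d+1)} for all z. Let f, g : ℝ^d → ℝ be measurable with M_f := sup_{r ≥ 1} ( r^{-(d+2α)} ∫_{B(0,r)} |f|² )^{1/2} < ∞ and M_g := sup_{r ≥ 1} ( r^{-(d+2α)} ∫_{B(0,r)} |g|² )^{1/2} < ∞. Then for every x ∈ ℝ^d: ∫_{ℝ^d} |G(x−y)| |f(y)| |g(y)| dy ≤ C M_f M_g ( λ^{2α−1} + λ^{-(d+1)} (1 + |x|)^{d+2α} ). -/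

import Mathlib

open MeasureTheory Metric ENNReal

noncomputable section

/-- Local Morrey `L²` norm `sup_{r ≥ 1} ( r^{-(d+2α)} ∫_{B(0,r)} |f|² )^{1/2}`,
valued in `ℝ≥0∞`. -/
def morrey {d : ℕ} {F : Type*} [NormedAddCommGroup F] (α : ℝ)
    (f : EuclideanSpace ℝ (Fin d) → F) : ℝ≥0∞ :=
  ⨆ r : {r : ℝ // 1 ≤ r},
    ((∫⁻ x in ball (0 : EuclideanSpace ℝ (Fin d)) (r : ℝ), (‖f x‖₊ : ℝ≥0∞) ^ 2) /
      ENNReal.ofReal ((r : ℝ) ^ ((d : ℝ) + 2 * α))) ^ ((1 : ℝ) / 2)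

lemma morrey_half {d : ℕ} (α : ℝ) (h : EuclideanSpace ℝ (Fin d) → ℝ)
    {r : ℝ} (hr : 1 ≤ r) :
    (∫⁻ y in ball (0 : EuclideanSpace ℝ (Fin d)) r, ((‖h y‖₊ : ℝ≥0∞)) ^ (2:ℝ)) ^ ((1:ℝ)/2)
      ≤ morrey α h * ENNReal.ofReal (r ^ ((d : ℝ) + 2 * α)) ^ ((1:ℝ)/2) := by
  have hrpos : (0:ℝ) < r := lt_of_lt_of_le one_pos hr
  set R := ENNReal.ofReal (r ^ ((d : ℝ) + 2 * α)) with hR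
  have hR0 : R ≠ 0 := by
    simp only [hR, ne_eq, ENNReal.ofReal_eq_zero, not_le]
    exact Real.rpow_pos_of_pos hrpos _
  have hRtop : R ≠ ⊤ := ENNReal.ofReal_ne_top
  have h2 : ∀ z : ℝ≥0∞, z ^ (2:ℝ) = z ^ (2:ℕ) := fun z => by
    rw [← ENNReal.rpow_natCast]; norm_num
  simp_rw [h2]
  set I := ∫⁻ y in ball (0 : EuclideanSpace ℝ (Fin d)) r, ((‖h y‖₊ : ℝ≥0∞)) ^ (2:ℕ) with hI
  have hsup : (I / R) ^ ((1:ℝ)/2) ≤ morrey α h := by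
    exact le_iSup (fun s : {r : ℝ // 1 ≤ r} =>
      ((∫⁻ x in ball (0 : EuclideanSpace ℝ (Fin d)) (s : ℝ), (‖h x‖₊ : ℝ≥0∞) ^ 2) /
        ENNReal.ofReal ((s : ℝ) ^ ((d : ℝ) + 2 * α))) ^ ((1 : ℝ) / 2)) ⟨r, hr⟩
  calc I ^ ((1:ℝ)/2) = ((I / R) * R) ^ ((1:ℝ)/2) := by rw [ENNReal.div_mul_cancel hR0 hRtop]
    _ = (I / R) ^ ((1:ℝ)/2) * R ^ ((1:ℝ)/2) := ENNReal.mul_rpow_of_nonneg _ _ (by norm_num)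
    _ ≤ morrey α h * R ^ ((1:ℝ)/2) := mul_le_mul_left hsup _

lemma morrey_CS {d : ℕ} (α : ℝ) (f g : EuclideanSpace ℝ (Fin d) → ℝ)
    (hf : Measurable f) (hg : Measurable g) {r : ℝ} (hr : 1 ≤ r) :
    ∫⁻ y in ball (0 : EuclideanSpace ℝ (Fin d)) r, (‖f y‖₊ : ℝ≥0∞) * (‖g y‖₊ : ℝ≥0∞)
      ≤ morrey α f * morrey α g * ENNReal.ofReal (r ^ ((d : ℝ) + 2 * α)) := by
  have hrpos : (0:ℝ) < r := lt_of_lt_of_le one_pos hr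
  set R := ENNReal.ofReal (r ^ ((d : ℝ) + 2 * α)) with hR
  have hR0 : R ≠ 0 := by
    simp only [hR, ne_eq, ENNReal.ofReal_eq_zero, not_le]
    exact Real.rpow_pos_of_pos hrpos _
  have hRtop : R ≠ ⊤ := ENNReal.ofReal_ne_top
  have hpq : Real.HolderConjugate 2 2 := Real.HolderConjugate.two_two
  have CS := ENNReal.lintegral_mul_le_Lp_mul_Lq
    (volume.restrict (ball (0 : EuclideanSpace ℝ (Fin d)) r)) hpq
    (hf.nnnorm.coe_nnreal_ennreal.aemeasurable) (hg.nnnorm.coe_nnreal_ennreal.aemeasurable)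
  simp only [Pi.mul_apply] at CS
  refine le_trans CS ?_
  have Hf := morrey_half α f hr
  have Hg := morrey_half α g hr
  rw [← hR] at Hf Hg
  have hRR : R ^ ((1:ℝ)/2) * R ^ ((1:ℝ)/2) = R := by
    rw [← ENNReal.rpow_add _ _ hR0 hRtop]; norm_num
  calc (∫⁻ y in ball (0 : EuclideanSpace ℝ (Fin d)) r, (‖f y‖₊ : ℝ≥0∞) ^ (2:ℝ)) ^ ((1:ℝ)/2) *
        (∫⁻ y in ball (0 : EuclideanSpace ℝ (Fin d)) r, (‖g y‖₊ : ℝ≥0∞) ^ (2:ℝ)) ^ ((1:ℝ)/2)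
      ≤ (morrey α f * R ^ ((1:ℝ)/2)) * (morrey α g * R ^ ((1:ℝ)/2)) := mul_le_mul' Hf Hg
    _ = morrey α f * morrey α g * (R ^ ((1:ℝ)/2) * R ^ ((1:ℝ)/2)) := by ring
    _ = morrey α f * morrey α g * R := by rw [hRR]

lemma add_rpow_le' {D a b : ℝ} (hD : 0 ≤ D) (ha : 0 ≤ a) (hb : 0 ≤ b) :
    (a + b) ^ D ≤ 2 ^ D * (a ^ D + b ^ D) := by
  have h2D : (0:ℝ) ≤ (2:ℝ) ^ D := Real.rpow_nonneg (by norm_num) D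
  rcases le_total a b with hab | hab
  · calc (a + b) ^ D ≤ (2 * b) ^ D :=
        Real.rpow_le_rpow (by linarith) (by linarith) hD
      _ = 2 ^ D * b ^ D := Real.mul_rpow (by norm_num) hb
      _ ≤ 2 ^ D * (a ^ D + b ^ D) := by
        have := Real.rpow_nonneg ha D; nlinarith
  · calc (a + b) ^ D ≤ (2 * a) ^ D :=
        Real.rpow_le_rpow (by linarith) (by linarith) hD
      _ = 2 ^ D * a ^ D := Real.mul_rpow (by norm_num) ha
      _ ≤ 2 ^ D * (a ^ D + b ^ D) := by
        have := Real.rpow_nonneg hb D; nlinarith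

lemma J_value {lam D β : ℝ} (hlam : 1 ≤ lam) (hβ0 : 0 < β) (hDβ : D < β) :
    ∫⁻ t in Set.Ioc (0:ℝ) (lam ^ (-β)), ENNReal.ofReal (t ^ (-(D/β)))
      = ENNReal.ofReal (lam ^ (D - β) * (β / (β - D))) := by
  have hlam0 : (0:ℝ) < lam := lt_of_lt_of_le one_pos hlam
  set T : ℝ := lam ^ (-β) with hT
  have hT0 : 0 < T := Real.rpow_pos_of_pos hlam0 _
  set r0 : ℝ := -(D/β) with hr0def
  have hr0 : (-1:ℝ) < r0 := by
    rw [hr0def, neg_lt_neg_iff]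
    exact (div_lt_one hβ0).mpr hDβ
  have hr01 : 0 < r0 + 1 := by linarith
  have hint : IntegrableOn (fun t : ℝ => t ^ r0) (Set.Ioc 0 T) :=
    (intervalIntegrable_iff_integrableOn_Ioc_of_le hT0.le).mp
      (intervalIntegral.intervalIntegrable_rpow' hr0)
  have hnn : 0 ≤ᵐ[volume.restrict (Set.Ioc (0:ℝ) T)] fun t : ℝ => t ^ r0 := by
    filter_upwards [ae_restrict_mem measurableSet_Ioc] with t ht
    exact Real.rpow_nonneg ht.1.le _
  rw [← MeasureTheory.ofReal_integral_eq_lintegral_ofReal hint hnn]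
  congr 1
  have hval : ∫ t in Set.Ioc (0:ℝ) T, t ^ r0 = (T ^ (r0 + 1) - (0:ℝ) ^ (r0 + 1)) / (r0 + 1) := by
    rw [← intervalIntegral.integral_of_le hT0.le]
    exact integral_rpow (Or.inl hr0)
  rw [hval, Real.zero_rpow (ne_of_gt hr01), sub_zero]
  have hβne : β ≠ 0 := ne_of_gt hβ0
  have hexp : T ^ (r0 + 1) = lam ^ (D - β) := by
    rw [hT, ← Real.rpow_mul hlam0.le]
    congr 1
    rw [hr0def]
    field_simp
    ring
  rw [hexp]
  have : r0 + 1 = (β - D) / β := by rw [hr0def]; field_simp; ring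
  rw [this, div_div_eq_mul_div, div_eq_mul_inv, div_eq_mul_inv]
  ring

/-- Proposition 6.6 (pointwise decay of the low-frequency pressure): if
`|G(z)| ≤ λ^{-(d+1)} (1+|z|/λ)^{-(d+1)}` then
`∫ |G(x−y)||f(y)||g(y)| dy ≤ C M_f M_g ( λ^{2α−1} + λ^{-(d+1)} (1+|x|)^{d+2α} )`,
with `C` depending only on `d` and `α < 1/2`. -/
theorem low_frequency_pressure_decay (d : ℕ) (hd : 1 ≤ d) (α : ℝ) (hα0 : 0 ≤ α)
    (hα : α < 1 / 2) :
    ∃ C : ℝ, 0 < C ∧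
      ∀ lam : ℝ, 1 ≤ lam →
      ∀ G : EuclideanSpace ℝ (Fin d) → ℝ, Measurable G →
        (∀ z, |G z| ≤ lam ^ (-((d : ℝ) + 1)) * (1 + ‖z‖ / lam) ^ (-((d : ℝ) + 1))) →
      ∀ f g : EuclideanSpace ℝ (Fin d) → ℝ, Measurable f → Measurable g →
        morrey α f < ⊤ → morrey α g < ⊤ →
        ∀ x : EuclideanSpace ℝ (Fin d),
          (∫⁻ y, ENNReal.ofReal |G (x - y)| * (‖f y‖₊ : ℝ≥0∞) * (‖g y‖₊ : ℝ≥0∞)) ≤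
            ENNReal.ofReal C * morrey α f * morrey α g *
              ENNReal.ofReal
                (lam ^ (2 * α - 1) + lam ^ (-((d : ℝ) + 1)) * (1 + ‖x‖) ^ ((d : ℝ) + 2 * α)) := by
  have hd1 : (1:ℝ) ≤ (d:ℝ) := by exact_mod_cast hd
  set D : ℝ := (d:ℝ) + 2 * α with hD
  set β : ℝ := (d:ℝ) + 1 with hβ
  have hD1 : (1:ℝ) ≤ D := by rw [hD]; linarith
  have hD0 : (0:ℝ) < D := lt_of_lt_of_le one_pos hD1
  have hβ0 : (0:ℝ) < β := by rw [hβ]; linarith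
  have hDβ : D < β := by rw [hD, hβ]; linarith
  have hDβ' : D - β = 2 * α - 1 := by rw [hD, hβ]; ring
  set c2 : ℝ := β / (β - D) with hc2
  have hc2_1 : (1:ℝ) ≤ c2 := by
    rw [hc2, le_div_iff₀ (by linarith)]; linarith
  have h2D : (0:ℝ) < (2:ℝ) ^ D := Real.rpow_pos_of_pos two_pos D
  refine ⟨2 ^ D * c2, mul_pos h2D (lt_of_lt_of_le one_pos hc2_1), ?_⟩
  intro lam hlam G hG hGb f g hf hg hMf hMg x
  have hlam0 : (0:ℝ) < lam := lt_of_lt_of_le one_pos hlam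
  set M : ℝ≥0∞ := morrey α f * morrey α g with hM
  set F : EuclideanSpace ℝ (Fin d) → ℝ≥0∞ := fun y => (‖f y‖₊ : ℝ≥0∞) * (‖g y‖₊ : ℝ≥0∞)
    with hF
  have hFmeas : Measurable F := hf.nnnorm.coe_nnreal_ennreal.mul hg.nnnorm.coe_nnreal_ennreal
  set h : EuclideanSpace ℝ (Fin d) → ℝ := fun y => |G (x - y)| with hh
  have hhmeas : Measurable h := (hG.comp (measurable_id.const_sub x)).abs
  set ν := volume.withDensity F with hν
  -- Step 1: rewrite as a layer-cake integral
  have step1 : (∫⁻ y, ENNReal.ofReal |G (x - y)| * (‖f y‖₊ : ℝ≥0∞) * (‖g y‖₊ : ℝ≥0∞))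
      = ∫⁻ t in Set.Ioi (0:ℝ), ν {y | t < h y} := by
    rw [← lintegral_eq_lintegral_meas_lt ν
      (Filter.Eventually.of_forall fun y => abs_nonneg _) hhmeas.aemeasurable]
    rw [hν, lintegral_withDensity_eq_lintegral_mul volume hFmeas
      hhmeas.ennreal_ofReal]
    refine lintegral_congr fun y => ?_
    simp only [Pi.mul_apply, hF, hh]
    ring
  -- pointwise bound on h
  set T : ℝ := lam ^ (-β) with hT
  have hT0 : (0:ℝ) < T := Real.rpow_pos_of_pos hlam0 _
  have hbound : ∀ y, h y ≤ T := by
    intro y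
    refine le_trans (hGb (x - y)) ?_
    rw [hT]
    have h1 : (1:ℝ) ≤ 1 + ‖x - y‖ / lam := by
      have : 0 ≤ ‖x - y‖ / lam := div_nonneg (norm_nonneg _) hlam0.le
      linarith
    have h2 : (1 + ‖x - y‖ / lam) ^ (-β) ≤ 1 :=
      Real.rpow_le_one_of_one_le_of_nonpos h1 (by linarith)
    calc lam ^ (-β) * (1 + ‖x - y‖ / lam) ^ (-β) ≤ lam ^ (-β) * 1 :=
          mul_le_mul_of_nonneg_left h2 (Real.rpow_nonneg hlam0.le _)
      _ = lam ^ (-β) := mul_one _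
  have hempty : ∀ t : ℝ, T ≤ t → {y : EuclideanSpace ℝ (Fin d) | t < h y} = ∅ := by
    intro t ht
    ext y
    simp only [Set.mem_setOf_eq, Set.mem_empty_iff_false, iff_false, not_lt]
    exact le_trans (hbound y) ht
  -- ball inclusion
  have hsubset : ∀ t : ℝ, 0 < t →
      {y : EuclideanSpace ℝ (Fin d) | t < h y} ⊆
        ball (0 : EuclideanSpace ℝ (Fin d)) (1 + ‖x‖ + t ^ (-(1/β))) := by
    intro t ht y hy
    simp only [Set.mem_setOf_eq, hh] at hy
    have h1 : t < lam ^ (-β) * (1 + ‖x - y‖ / lam) ^ (-β) := lt_of_lt_of_le hy (hGb (x - y))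
    have hs0 : (0:ℝ) ≤ ‖x - y‖ := norm_nonneg _
    have hu : (0:ℝ) < lam * (1 + ‖x - y‖ / lam) := by positivity
    have h2 : lam ^ (-β) * (1 + ‖x - y‖ / lam) ^ (-β)
        = (lam * (1 + ‖x - y‖ / lam)) ^ (-β) :=
      (Real.mul_rpow hlam0.le (by positivity)).symm
    rw [h2] at h1
    have h4 := Real.rpow_lt_rpow_of_neg ht h1
      (by rw [neg_lt, neg_zero]; positivity : -(1/β) < 0)
    rw [← Real.rpow_mul hu.le] at h4
    have hexp1 : (-β) * (-(1/β)) = 1 := by field_simp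
    rw [hexp1, Real.rpow_one] at h4
    have h5 : ‖x - y‖ < t ^ (-(1/β)) := by
      have heq : lam * (1 + ‖x - y‖ / lam) = lam + ‖x - y‖ := by field_simp
      rw [heq] at h4
      linarith
    rw [mem_ball_zero_iff]
    have h6 : ‖y‖ - ‖x‖ ≤ ‖y - x‖ := norm_sub_norm_le y x
    rw [norm_sub_rev] at h6
    linarith
  -- the measure ν of balls
  have hA : ∀ r : ℝ, 1 ≤ r → ν (ball (0 : EuclideanSpace ℝ (Fin d)) r)
      ≤ M * ENNReal.ofReal (r ^ D) := by
    intro r hr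
    rw [hν, withDensity_apply F measurableSet_ball]
    exact morrey_CS α f g hf hg hr
  rw [step1]
  -- split the t-integral
  have split : (∫⁻ t in Set.Ioi (0:ℝ), ν {y | t < h y})
      = (∫⁻ t in Set.Ioc (0:ℝ) T, ν {y | t < h y})
        + ∫⁻ t in Set.Ioi T, ν {y | t < h y} := by
    rw [← lintegral_union measurableSet_Ioi Set.Ioc_disjoint_Ioi_same,
      Set.Ioc_union_Ioi_eq_Ioi hT0.le]
  have tail0 : (∫⁻ t in Set.Ioi T, ν {y | t < h y}) = 0 := by
    have hz : (fun t => ν {y | t < h y}) =ᵐ[volume.restrict (Set.Ioi T)] 0 := by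
      filter_upwards [ae_restrict_mem measurableSet_Ioi] with t ht
      simp [hempty t (le_of_lt ht)]
    rw [lintegral_congr_ae hz]
    simp
  rw [split, tail0, add_zero]
  -- pointwise bound on the Ioc piece
  set φ : ℝ → ℝ≥0∞ := fun t => M * ENNReal.ofReal ((2:ℝ) ^ D) *
      (ENNReal.ofReal ((1 + ‖x‖) ^ D) + ENNReal.ofReal (t ^ (-(D/β)))) with hφ
  have hpt : ∀ t ∈ Set.Ioc (0:ℝ) T, ν {y | t < h y} ≤ φ t := by
    intro t ht
    have ht0 : (0:ℝ) < t := ht.1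
    have htb : (0:ℝ) < t ^ (-(1/β)) := Real.rpow_pos_of_pos ht0 _
    have hr1 : (1:ℝ) ≤ 1 + ‖x‖ + t ^ (-(1/β)) := by
      have := norm_nonneg x; linarith
    calc ν {y | t < h y} ≤ ν (ball (0 : EuclideanSpace ℝ (Fin d)) (1 + ‖x‖ + t ^ (-(1/β)))) :=
          measure_mono (hsubset t ht0)
      _ ≤ M * ENNReal.ofReal ((1 + ‖x‖ + t ^ (-(1/β))) ^ D) := hA _ hr1
      _ ≤ φ t := by
          rw [hφ]
          have hkey : (1 + ‖x‖ + t ^ (-(1/β))) ^ D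
              ≤ 2 ^ D * ((1 + ‖x‖) ^ D + (t ^ (-(1/β))) ^ D) :=
            add_rpow_le' hD0.le (by have := norm_nonneg x; linarith) htb.le
          have hDD : (t ^ (-(1/β))) ^ D = t ^ (-(D/β)) := by
            rw [← Real.rpow_mul ht0.le]
            congr 1
            ring
          rw [hDD] at hkey
          calc M * ENNReal.ofReal ((1 + ‖x‖ + t ^ (-(1/β))) ^ D)
              ≤ M * ENNReal.ofReal (2 ^ D * ((1 + ‖x‖) ^ D + t ^ (-(D/β)))) :=
                mul_le_mul_right (ENNReal.ofReal_le_ofReal hkey) M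
            _ = M * (ENNReal.ofReal ((2:ℝ) ^ D) *
                  (ENNReal.ofReal ((1 + ‖x‖) ^ D) + ENNReal.ofReal (t ^ (-(D/β))))) := by
                rw [ENNReal.ofReal_mul h2D.le, ENNReal.ofReal_add
                  (Real.rpow_nonneg (by have := norm_nonneg x; linarith) D)
                  (Real.rpow_nonneg ht0.le _)]
            _ = M * ENNReal.ofReal ((2:ℝ) ^ D) *
                  (ENNReal.ofReal ((1 + ‖x‖) ^ D) + ENNReal.ofReal (t ^ (-(D/β)))) := by ring
  have hφmeas : Measurable fun t : ℝ =>
      ENNReal.ofReal ((1 + ‖x‖) ^ D) + ENNReal.ofReal (t ^ (-(D/β))) :=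
    measurable_const.add (ENNReal.measurable_ofReal.comp (measurable_id.pow_const _))
  have hint1 : (∫⁻ t in Set.Ioc (0:ℝ) T, ν {y | t < h y})
      ≤ ∫⁻ t in Set.Ioc (0:ℝ) T, φ t := by
    refine lintegral_mono_ae ?_
    filter_upwards [ae_restrict_mem measurableSet_Ioc] with t ht
    exact hpt t ht
  have hint2 : (∫⁻ t in Set.Ioc (0:ℝ) T, φ t)
      = M * ENNReal.ofReal ((2:ℝ) ^ D) *
        (ENNReal.ofReal ((1 + ‖x‖) ^ D) * ENNReal.ofReal T
          + ENNReal.ofReal (lam ^ (2 * α - 1) * c2)) := by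
    rw [hφ]
    rw [lintegral_const_mul _ hφmeas]
    congr 1
    rw [lintegral_add_left measurable_const]
    rw [setLIntegral_const, Real.volume_Ioc, sub_zero]
    rw [hT, J_value hlam hβ0 hDβ, hDβ']
  refine le_trans hint1 (le_trans (le_of_eq hint2) ?_)
  -- final real-number bookkeeping
  have ha1 : (0:ℝ) ≤ (1 + ‖x‖) ^ D := Real.rpow_nonneg (by positivity) D
  have ha2 : (0:ℝ) ≤ lam ^ (2 * α - 1) := Real.rpow_nonneg hlam0.le _
  have hofR : ENNReal.ofReal ((2:ℝ) ^ D) *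
      (ENNReal.ofReal ((1 + ‖x‖) ^ D) * ENNReal.ofReal T
        + ENNReal.ofReal (lam ^ (2 * α - 1) * c2))
      ≤ ENNReal.ofReal (2 ^ D * c2) *
        ENNReal.ofReal (lam ^ (2 * α - 1) + lam ^ (-β) * (1 + ‖x‖) ^ D) := by
    rw [← ENNReal.ofReal_mul ha1,
      ← ENNReal.ofReal_add (mul_nonneg ha1 hT0.le) (mul_nonneg ha2 (by linarith)),
      ← ENNReal.ofReal_mul h2D.le,
      ← ENNReal.ofReal_mul (mul_nonneg h2D.le (by linarith : (0:ℝ) ≤ c2))]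
    apply ENNReal.ofReal_le_ofReal
    rw [hT]
    have hTnn : (0:ℝ) ≤ lam ^ (-β) := Real.rpow_nonneg hlam0.le _
    nlinarith [mul_nonneg (mul_nonneg h2D.le (mul_nonneg ha1 hTnn)) (sub_nonneg.mpr hc2_1),
      mul_nonneg h2D.le ha2, mul_nonneg h2D.le (mul_nonneg ha1 hTnn)]
  calc M * ENNReal.ofReal ((2:ℝ) ^ D) *
        (ENNReal.ofReal ((1 + ‖x‖) ^ D) * ENNReal.ofReal T
          + ENNReal.ofReal (lam ^ (2 * α - 1) * c2))
      = M * (ENNReal.ofReal ((2:ℝ) ^ D) *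
          (ENNReal.ofReal ((1 + ‖x‖) ^ D) * ENNReal.ofReal T
            + ENNReal.ofReal (lam ^ (2 * α - 1) * c2))) := by ring
    _ ≤ M * (ENNReal.ofReal (2 ^ D * c2) *
          ENNReal.ofReal (lam ^ (2 * α - 1) + lam ^ (-β) * (1 + ‖x‖) ^ D)) :=
        mul_le_mul_right hofR M
    _ = ENNReal.ofReal (2 ^ D * c2) * morrey α f * morrey α g *
          ENNReal.ofReal (lam ^ (2 * α - 1) + lam ^ (-β) * (1 + ‖x‖) ^ D) := by
        rw [hM]; ring

end
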